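/- arXiv:1603.05693 — 2 statements merged into one kernel-verified Lean document; each statement's English description precedes it below -/
import Mathlib

section
/- Let J_n be an irreducible Markov chain on finite state space X = {0,...,m} and let X_n be sojourn times with E_i[X_1^d · 1(J_1 = j)] < ∞ for all i, j ∈ X. Then the d-th moment of the accumulated reward W_0 = Σ_{n=1}^{U_0} X_n up to the first hitting time U_0 of state 0 is finite: E_i[W_0^d] < ∞ for all i ∈ X. -/
open MeasureTheory ENNReal ProbabilityTheory

/-- Prepend one step to a trajectory of a Markov renewal process. The path `ω` encodes
`ω n = (J_{n+1}, X_{n+1})`. -/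
def consStep {X : Type*} (q : X × ℝ) (ω : ℕ → X × ℝ) : ℕ → X × ℝ
  | 0 => q
  | n + 1 => ω n

/-- Accumulated reward `W₀ = ∑_{n=1}^{U₀} X_n` up to the first hitting time
`U₀ = min{n ≥ 1 : J_n = 0}` (in the path encoding `ω n = (J_{n+1}, X_{n+1})`). -/
noncomputable def hitReward {X : Type*} [Zero X] (ω : ℕ → X × ℝ) : ℝ :=
  ∑ n ∈ Finset.range (sInf {n | (ω n).1 = 0} + 1), (ω n).2

lemma measurable_consStep_pair {X : Type*} [MeasurableSpace X] :
    Measurable fun p : (X × ℝ) × (ℕ → X × ℝ) => consStep p.1 p.2 := by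
  apply measurable_pi_lambda
  intro n
  match n with
  | 0 => exact measurable_fst
  | (k+1) => exact (measurable_pi_apply k).comp measurable_snd

lemma measurable_consStep_left {X : Type*} [MeasurableSpace X] (q : X × ℝ) :
    Measurable (consStep q) :=
  measurable_consStep_pair.comp measurable_prodMk_left

/-- One-step decomposition of a lower integral with respect to the law of a Markov renewal
process. -/
lemma step_lintegral {m : ℕ}
    (Q : Fin (m + 1) → Measure (Fin (m + 1) × ℝ))
    (μ : Fin (m + 1) → Measure (ℕ → Fin (m + 1) × ℝ))
    (hprob : ∀ i, IsProbabilityMeasure (μ i))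
    (hMRP : ∀ (i : Fin (m + 1)) (A : Set (ℕ → Fin (m + 1) × ℝ)), MeasurableSet A →
      μ i A = ∫⁻ q, μ q.1 {ω | consStep q ω ∈ A} ∂ Q i)
    (i : Fin (m + 1)) {f : (ℕ → Fin (m + 1) × ℝ) → ℝ≥0∞} (hf : Measurable f) :
    ∫⁻ ω, f ω ∂ μ i = ∫⁻ q, ∫⁻ ω, f (consStep q ω) ∂ μ q.1 ∂ Q i := by
  have hker : Measurable (fun q : Fin (m + 1) × ℝ => μ q.1) :=
    measurable_from_top.comp measurable_fst
  let κ : Kernel (Fin (m + 1) × ℝ) (ℕ → Fin (m + 1) × ℝ) := ⟨fun q => μ q.1, hker⟩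
  haveI : IsMarkovKernel κ := ⟨fun q => hprob q.1⟩
  have hsec : ∀ {s : Set (ℕ → Fin (m + 1) × ℝ)}, MeasurableSet s →
      Measurable fun q : Fin (m + 1) × ℝ => μ q.1 (consStep q ⁻¹' s) := by
    intro s hs
    have ht : MeasurableSet {p : (Fin (m + 1) × ℝ) × (ℕ → Fin (m + 1) × ℝ) |
        consStep p.1 p.2 ∈ s} := measurable_consStep_pair hs
    exact Kernel.measurable_kernel_prodMk_left (κ := κ) ht
  have hη : Measurable fun q : Fin (m + 1) × ℝ => (μ q.1).map (consStep q) := by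
    refine Measure.measurable_of_measurable_coe _ fun s hs => ?_
    have h1 : ∀ q : Fin (m + 1) × ℝ, (μ q.1).map (consStep q) s = μ q.1 (consStep q ⁻¹' s) :=
      fun q => Measure.map_apply (measurable_consStep_left q) hs
    simp_rw [h1]
    exact hsec hs
  have hbind : μ i = (Q i).bind fun q => (μ q.1).map (consStep q) := by
    refine Measure.ext fun s hs => ?_
    rw [Measure.bind_apply hs hη.aemeasurable, hMRP i s hs]
    refine lintegral_congr fun q => ?_
    rw [Measure.map_apply (measurable_consStep_left q) hs]
    rfl
  rw [hbind, Measure.lintegral_bind hη.aemeasurable hf.aemeasurable]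
  refine lintegral_congr fun q => ?_
  rw [lintegral_map hf (measurable_consStep_left q)]

/-- For an irreducible Markov renewal process with nonnegative sojourn times
and `E_i[X₁^d 1(J₁ = j)] < ∞` for all `i, j`, the `d`-th moment of the accumulated reward
`W₀` up to the first hitting time of `0` is finite: `E_i[W₀^d] < ∞` for all `i`. -/
theorem dth_moment_hitting_reward_finite {m : ℕ} (d : ℕ)
    (Q : Fin (m + 1) → Measure (Fin (m + 1) × ℝ))
    (hQ : ∀ i, IsProbabilityMeasure (Q i))
    (hQpos : ∀ i, Q i {q | q.2 < 0} = 0)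
    (hirr : ∀ i j : Fin (m + 1), ∃ n,
      0 < ((Matrix.of fun i j => (Q i {q | q.1 = j}).toReal) ^ n) i j)
    (hmom : ∀ i j, ∫⁻ q in {q | q.1 = j}, (ENNReal.ofReal q.2) ^ d ∂ Q i ≠ ⊤)
    (μ : Fin (m + 1) → Measure (ℕ → Fin (m + 1) × ℝ))
    (hprob : ∀ i, IsProbabilityMeasure (μ i))
    (hMRP : ∀ (i : Fin (m + 1)) (A : Set (ℕ → Fin (m + 1) × ℝ)), MeasurableSet A →
      μ i A = ∫⁻ q, μ q.1 {ω | consStep q ω ∈ A} ∂ Q i) :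
    ∀ i, ∫⁻ ω, ENNReal.ofReal (hitReward ω) ^ d ∂ μ i ≠ ⊤ := by
  classical
  haveI : ∀ j, IsProbabilityMeasure (μ j) := hprob
  haveI : ∀ j, IsProbabilityMeasure (Q j) := hQ
  rcases Nat.eq_zero_or_pos d with hd0 | hdpos
  · subst hd0
    intro i
    simp [lintegral_one]
  intro i
  have hdne : d ≠ 0 := hdpos.ne'
  have hstep : ∀ (j : Fin (m + 1)) (f : (ℕ → Fin (m + 1) × ℝ) → ℝ≥0∞), Measurable f →
      ∫⁻ ω, f ω ∂ μ j = ∫⁻ q, ∫⁻ ω, f (consStep q ω) ∂ μ q.1 ∂ Q j :=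
    fun j f hf => step_lintegral Q μ hprob hMRP j hf
  -- the sets `E n` : no visit to `0` among the first `n` steps
  set E : ℕ → Set (ℕ → Fin (m + 1) × ℝ) :=
    fun n => {ω | ∀ k, k < n → (ω k).1 ≠ 0} with hE_def
  have hEmem : ∀ n ω, ω ∈ E n ↔ ∀ k, k < n → (ω k).1 ≠ 0 := fun n ω => Iff.rfl
  have hEmeas : ∀ n, MeasurableSet (E n) := by
    intro n
    have : E n = ⋂ (k : ℕ), ⋂ (_ : k < n), (fun ω : ℕ → Fin (m + 1) × ℝ => (ω k).1) ⁻¹' {0}ᶜ := by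
      ext ω; simp [hE_def]
    rw [this]
    exact MeasurableSet.iInter fun k => MeasurableSet.iInter fun _ =>
      ((measurable_fst.comp (measurable_pi_apply k)) (measurableSet_singleton 0).compl)
  have hEanti : ∀ a b, a ≤ b → E b ⊆ E a := by
    intro a b hab ω hω k hk
    exact hω k (lt_of_lt_of_le hk hab)
  have hE0 : E 0 = Set.univ := by
    ext ω; simp [hE_def]
  have hconsE : ∀ (q : Fin (m + 1) × ℝ) ω n,
      consStep q ω ∈ E (n + 1) ↔ (q.1 ≠ 0 ∧ ω ∈ E n) := by
    intro q ω n
    constructor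
    · intro h
      refine ⟨h 0 (Nat.succ_pos n), fun k hk => h (k + 1) (Nat.succ_lt_succ hk)⟩
    · rintro ⟨h0, h⟩ k hk
      match k with
      | 0 => exact h0
      | (k+1) => exact h k (Nat.lt_of_succ_lt_succ hk)
  -- measurability helpers
  have hfstmeas : ∀ h : Fin (m + 1) → ℝ≥0∞, Measurable fun q : Fin (m + 1) × ℝ => h q.1 :=
    fun h => measurable_from_top.comp measurable_fst
  have hsetmeas : ∀ k : Fin (m + 1), MeasurableSet {q : Fin (m + 1) × ℝ | q.1 = k} := by
    intro k
    exact measurable_fst (measurableSet_singleton k)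
  -- lintegral of a function of the first coordinate
  have hlintfst : ∀ (j) (h : Fin (m + 1) → ℝ≥0∞),
      ∫⁻ q, h q.1 ∂ Q j = ∑ k, h k * Q j {q | q.1 = k} := by
    intro j h
    have h1 : ∀ q : Fin (m + 1) × ℝ,
        h q.1 = ∑ k, Set.indicator {q : Fin (m + 1) × ℝ | q.1 = k} (fun _ => h k) q := by
      intro q
      rw [Finset.sum_eq_single q.1]
      · simp [Set.indicator_of_mem]
      · intro k _ hk
        exact Set.indicator_of_notMem (by simpa using fun h' => hk h'.symm) _
      · simp
    calc ∫⁻ q, h q.1 ∂ Q j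
        = ∫⁻ q, ∑ k, Set.indicator {q : Fin (m + 1) × ℝ | q.1 = k} (fun _ => h k) q ∂ Q j :=
          lintegral_congr h1
      _ = ∑ k, ∫⁻ q, Set.indicator {q : Fin (m + 1) × ℝ | q.1 = k} (fun _ => h k) q ∂ Q j :=
          lintegral_finset_sum _ fun k _ => (measurable_const.indicator (hsetmeas k))
      _ = ∑ k, h k * Q j {q | q.1 = k} := by
          refine Finset.sum_congr rfl fun k _ => ?_
          rw [lintegral_indicator_const (hsetmeas k)]
  -- the transition matrix
  set P : Matrix (Fin (m + 1)) (Fin (m + 1)) ℝ :=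
    Matrix.of fun i j => (Q i {q | q.1 = j}).toReal with hP_def
  have hQfin : ∀ j k, Q j {q : Fin (m + 1) × ℝ | q.1 = k} ≠ ⊤ := fun j k => measure_ne_top _ _
  have hPnn : ∀ j k, 0 ≤ P j k := fun j k => ENNReal.toReal_nonneg
  have hPpow : ∀ (n) (j k), 0 ≤ (P ^ n) j k := by
    intro n
    induction n with
    | zero => intro j k; by_cases h : j = k <;> simp [pow_zero, Matrix.one_apply, h]
    | succ n ih =>
      intro j k
      rw [pow_succ, Matrix.mul_apply]
      exact Finset.sum_nonneg fun l _ => mul_nonneg (ih j l) (hPnn l k)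
  have hofP : ∀ j k, Q j {q : Fin (m + 1) × ℝ | q.1 = k} = ENNReal.ofReal (P j k) := by
    intro j k
    rw [hP_def]
    simp [ENNReal.ofReal_toReal (hQfin j k)]
  have hrow : ∀ j, ∑ k, Q j {q : Fin (m + 1) × ℝ | q.1 = k} = 1 := by
    intro j
    have := hlintfst j fun _ => 1
    simp only [lintegral_one, measure_univ, one_mul] at this
    exact this.symm
  -- marginal law of the chain
  have hmeasset : ∀ (n : ℕ) (k : Fin (m + 1)),
      MeasurableSet {ω : ℕ → Fin (m + 1) × ℝ | (ω n).1 = k} := by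
    intro n k
    exact (measurable_fst.comp (measurable_pi_apply n)) (measurableSet_singleton k)
  have hpmat : ∀ (n : ℕ) (j k : Fin (m + 1)),
      μ j {ω | (ω n).1 = k} = ENNReal.ofReal ((P ^ (n + 1)) j k) := by
    intro n
    induction n with
    | zero =>
      intro j k
      rw [hMRP j _ (hmeasset 0 k)]
      have h1 : ∀ q : Fin (m + 1) × ℝ,
          μ q.1 {ω | (consStep q ω 0).1 = k} = (fun l => if l = k then 1 else 0) q.1 := by
        intro q
        by_cases h : q.1 = k
        · have : {ω : ℕ → Fin (m + 1) × ℝ | (consStep q ω 0).1 = k} = Set.univ := by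
            ext ω; simp [consStep, h]
          simp [this, h]
        · have : {ω : ℕ → Fin (m + 1) × ℝ | (consStep q ω 0).1 = k} = ∅ := by
            ext ω; simp [consStep, h]
          simp [this, h]
      have h2 := hlintfst j (fun l => if l = k then 1 else 0)
      simp only [Set.mem_setOf_eq]
      rw [lintegral_congr h1]
      beta_reduce
      rw [h2]
      rw [Finset.sum_eq_single k (by intro l _ hl; simp [hl]) (by simp)]
      simp [pow_one, hofP j k]
    | succ n ih =>
      intro j k
      rw [hMRP j _ (hmeasset (n+1) k)]
      have h1 : ∀ q : Fin (m + 1) × ℝ,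
          μ q.1 {ω | (consStep q ω (n+1)).1 = k} =
            (fun l => ENNReal.ofReal ((P ^ (n + 1)) l k)) q.1 := by
        intro q
        have : {ω : ℕ → Fin (m + 1) × ℝ | (consStep q ω (n+1)).1 = k} =
            {ω : ℕ → Fin (m + 1) × ℝ | (ω n).1 = k} := rfl
        rw [this, ih q.1 k]
      have h2' := hlintfst j (fun l => ENNReal.ofReal ((P ^ (n + 1)) l k))
      simp only [Set.mem_setOf_eq]
      rw [lintegral_congr h1]
      beta_reduce
      rw [h2']
      have h2 : ∀ l, ENNReal.ofReal ((P ^ (n + 1)) l k) * Q j {q | q.1 = l} =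
          ENNReal.ofReal (P j l * (P ^ (n + 1)) l k) := by
        intro l
        rw [hofP j l, ← ENNReal.ofReal_mul (hPpow (n+1) l k), mul_comm]
      rw [Finset.sum_congr rfl fun l _ => h2 l, ← ENNReal.ofReal_sum_of_nonneg
        (fun l _ => mul_nonneg (hPnn j l) (hPpow (n+1) l k))]
      congr 1
      rw [show (P ^ (n + 1 + 1)) = P * P ^ (n + 1) from pow_succ' P (n + 1), Matrix.mul_apply]
  -- irreducibility: from each state, `0` is reachable in at least one step
  have hpos1 : ∀ j, ∃ n, 1 ≤ n ∧ 0 < (P ^ n) j 0 := by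
    have key : ∀ j k : Fin (m + 1), 0 < P j k → ∀ n, 0 < (P ^ n) k 0 → 0 < (P ^ (n + 1)) j 0 := by
      intro j k hjk n hk
      rw [pow_succ', Matrix.mul_apply]
      refine Finset.sum_pos' (fun l _ => mul_nonneg (hPnn j l) (hPpow n l 0)) ?_
      exact ⟨k, Finset.mem_univ k, mul_pos hjk hk⟩
    have hstep' : ∀ j : Fin (m + 1), ∃ k, 0 < P j k := by
      intro j
      by_contra h
      push_neg at h
      have hz : ∀ k, Q j {q : Fin (m + 1) × ℝ | q.1 = k} = 0 := by
        intro k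
        have h1 : (Q j {q : Fin (m + 1) × ℝ | q.1 = k}).toReal = 0 :=
          le_antisymm (h k) ENNReal.toReal_nonneg
        exact (ENNReal.toReal_eq_zero_iff _).mp h1 |>.resolve_right (hQfin j k)
      have := hrow j
      simp [hz] at this
    intro j
    obtain ⟨n, hn⟩ := hirr j 0
    match n, hn with
    | (n+1), hn => exact ⟨n + 1, Nat.succ_le_succ (Nat.zero_le n), hn⟩
    | 0, hn =>
      have hj0 : j = 0 := by
        by_contra h
        simp [pow_zero, Matrix.one_apply, h] at hn
      subst hj0
      obtain ⟨k, hk⟩ := hstep' 0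
      obtain ⟨n', hn'⟩ := hirr k 0
      match n', hn' with
      | 0, hn' =>
        have hk0 : k = 0 := by
          by_contra h
          simp [pow_zero, Matrix.one_apply, h] at hn'
        subst hk0
        refine ⟨1, le_refl 1, ?_⟩
        have : 0 < (P ^ 0) 0 0 := by simp [pow_zero, Matrix.one_apply]
        exact key 0 0 hk 0 this
      | (n'+1), hn' =>
        exact ⟨n' + 2, by omega, key 0 k hk (n' + 1) hn'⟩
  -- the survival probabilities A n j
  set A : ℕ → Fin (m + 1) → ℝ≥0∞ := fun n j => μ j (E n) with hA_def
  have hA_eq : ∀ n j, A n j = μ j (E n) := fun n j => rfl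
  have hA0 : ∀ j, A 0 j = 1 := by intro j; simp [hA_def, hE0]
  have hAanti : ∀ j a b, a ≤ b → A b j ≤ A a j := fun j a b hab =>
    measure_mono (hEanti a b hab)
  have hAle1 : ∀ n j, A n j ≤ 1 := fun n j => prob_le_one
  have hArec : ∀ n j, A (n + 1) j =
      ∫⁻ q, (fun l => if l = 0 then 0 else A n l) q.1 ∂ Q j := by
    intro n j
    show μ j (E (n + 1)) = _
    rw [hMRP j _ (hEmeas (n + 1))]
    refine lintegral_congr fun q => ?_
    by_cases hq : q.1 = 0
    · have : {ω | consStep q ω ∈ E (n + 1)} = ∅ := by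
        ext ω; simp [hconsE, hq]
      simp [this, hq]
    · have : {ω | consStep q ω ∈ E (n + 1)} = E n := by
        ext ω; simp [hconsE, hq]
      simp [this, hq]; rfl
  -- uniform contraction after N steps
  choose nfun hn1 hnpos using hpos1
  set N : ℕ := Finset.univ.sup nfun with hN_def
  have hN1 : 1 ≤ N := le_trans (hn1 0) (Finset.le_sup (Finset.mem_univ 0))
  have hAN : ∀ j, A N j < 1 := by
    intro j
    have h1 : A N j ≤ A (nfun j) j := hAanti j (nfun j) N (Finset.le_sup (Finset.mem_univ j))
    have h2 : A (nfun j) j < 1 := by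
      obtain ⟨n, hn⟩ : ∃ n, nfun j = n + 1 := ⟨nfun j - 1, by have := hn1 j; omega⟩
      rw [hn]
      have hdisj : Disjoint (E (n + 1)) {ω | (ω n).1 = 0} := by
        refine Set.disjoint_left.mpr fun ω hω hω0 => ?_
        exact ((hEmem (n + 1) ω).mp hω n (Nat.lt_succ_self n)) hω0
      have hmeasset' : MeasurableSet {ω : ℕ → Fin (m + 1) × ℝ | (ω n).1 = 0} :=
        (measurable_fst.comp (measurable_pi_apply n)) (measurableSet_singleton 0)
      have hsum : A (n + 1) j + μ j {ω | (ω n).1 = 0} ≤ 1 := by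
        rw [← measure_union hdisj hmeasset']
        exact prob_le_one
      have hpp : 0 < μ j {ω : ℕ → Fin (m + 1) × ℝ | (ω n).1 = 0} := by
        rw [hpmat n j 0]
        rw [ENNReal.ofReal_pos]
        have := hnpos j
        rw [hn] at this
        exact this
      calc A (n + 1) j ≤ 1 - μ j {ω | (ω n).1 = 0} :=
            ENNReal.le_sub_of_add_le_right (measure_ne_top _ _) hsum
        _ < 1 := ENNReal.sub_lt_self one_ne_top one_ne_zero hpp.ne'
    exact lt_of_le_of_lt h1 h2
  -- the geometric decay rate ρ
  set α : ℕ → ℝ≥0∞ := fun n => Finset.univ.sup fun j => A n j with hα_def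
  have hαle : ∀ n j, A n j ≤ α n := fun n j => Finset.le_sup (Finset.mem_univ j)
  have hα1 : ∀ n, α n ≤ 1 := fun n => Finset.sup_le fun j _ => hAle1 n j
  have hαanti : ∀ a b, a ≤ b → α b ≤ α a := fun a b hab =>
    Finset.sup_le fun j _ => (hAanti j a b hab).trans (hαle a j)
  set ρ : ℝ≥0∞ := α N ⊔ 2⁻¹ with hρ_def
  have hρ1 : ρ < 1 := by
    rw [hρ_def]
    refine sup_lt_iff.mpr ⟨?_, ?_⟩
    · rw [hα_def]
      exact (Finset.sup_lt_iff (by norm_num)).mpr fun j _ => hAN j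
    · exact ENNReal.inv_lt_one.mpr one_lt_two
  have hρ0 : ρ ≠ 0 := by
    have : (2⁻¹ : ℝ≥0∞) ≤ ρ := le_sup_right
    intro h
    rw [h] at this
    simp at this
  have hρtop : ρ ≠ ⊤ := (hρ1.trans one_lt_top).ne
  have hAab : ∀ b n j, A (b + n) j ≤ A b j * α n := by
    intro b
    induction b with
    | zero =>
      intro n j
      rw [Nat.zero_add, hA0 j, one_mul]
      exact hαle n j
    | succ b ih =>
      intro n j
      have h1 : b + 1 + n = (b + n) + 1 := by omega
      rw [h1, hArec (b + n) j]
      have h2 : ∀ q : Fin (m + 1) × ℝ,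
          (fun l => if l = 0 then 0 else A (b + n) l) q.1 ≤
          (fun l => if l = 0 then 0 else A b l) q.1 * α n := by
        intro q
        by_cases hq : q.1 = 0
        · simp [hq]
        · simp only [hq, if_neg hq, if_false]
          exact ih n q.1
      calc ∫⁻ q, (fun l => if l = 0 then 0 else A (b + n) l) q.1 ∂ Q j
          ≤ ∫⁻ q, (fun l => if l = 0 then 0 else A b l) q.1 * α n ∂ Q j :=
            lintegral_mono h2
        _ = (∫⁻ q, (fun l => if l = 0 then 0 else A b l) q.1 ∂ Q j) * α n :=
            lintegral_mul_const _ (hfstmeas fun l => if l = 0 then 0 else A b l)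
        _ = A (b + 1) j * α n := by rw [← hArec b j]
  have hαsub : ∀ a b, α (a + b) ≤ α a * α b := by
    intro a b
    refine Finset.sup_le fun j _ => ?_
    exact (hAab a b j).trans (mul_le_mul_left (hαle a j) _)
  have hαN : α N ≤ ρ := le_sup_left
  have hαk : ∀ k, α (N * k) ≤ ρ ^ k := by
    intro k
    induction k with
    | zero => simpa using hα1 0
    | succ k ih =>
      have h1 : N * (k + 1) = N + N * k := by ring
      rw [h1, pow_succ]
      exact (hαsub N (N * k)).trans (mul_le_mul' hαN ih) |>.trans_eq (mul_comm _ _)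
  have hρbound : ∀ n j, A n j ≤ ρ ^ (n / N) := by
    intro n j
    have h1 : N * (n / N) ≤ n := by
      rw [mul_comm]
      exact Nat.div_mul_le_self n N
    exact ((hAanti j _ _ h1).trans (hαle _ j)).trans (hαk (n / N))
  -- the moment bound M
  set M : ℝ≥0∞ := ∑ j, ∑ k, ∫⁻ q in {q : Fin (m + 1) × ℝ | q.1 = k},
      (ENNReal.ofReal q.2) ^ d ∂ Q j with hM_def
  have hMtop : M ≠ ⊤ := by
    rw [hM_def]
    refine (ENNReal.sum_lt_top.mpr fun j _ => ?_).ne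
    exact ENNReal.sum_lt_top.mpr fun k _ => (hmom j k).lt_top
  have hMj : ∀ j, ∫⁻ q, (ENNReal.ofReal q.2) ^ d ∂ Q j ≤ M := by
    intro j
    have hdecomp : ∫⁻ q, (ENNReal.ofReal q.2) ^ d ∂ Q j =
        ∑ k, ∫⁻ q in {q : Fin (m + 1) × ℝ | q.1 = k}, (ENNReal.ofReal q.2) ^ d ∂ Q j := by
      have huniv : (Set.univ : Set (Fin (m + 1) × ℝ)) = ⋃ k, {q | q.1 = k} := by
        ext q; simp
      have hdisj : Pairwise (Function.onFun Disjoint fun k : Fin (m + 1) =>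
          {q : Fin (m + 1) × ℝ | q.1 = k}) := by
        intro k l hkl
        refine Set.disjoint_left.mpr fun q hq hq' => ?_
        exact hkl (hq ▸ hq' ▸ rfl : k = l)
      rw [← setLIntegral_univ, huniv, lintegral_iUnion hsetmeas hdisj, tsum_fintype]
    rw [hdecomp, hM_def]
    exact Finset.single_le_sum
      (f := fun j => ∑ k, ∫⁻ q in {q : Fin (m + 1) × ℝ | q.1 = k}, (ENNReal.ofReal q.2) ^ d ∂ Q j)
      (fun k _ => zero_le) (Finset.mem_univ j)
  -- the summands f n and their moments I n j
  set f : ℕ → (ℕ → Fin (m + 1) × ℝ) → ℝ≥0∞ :=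
    fun n => (E n).indicator fun ω => ENNReal.ofReal ((ω n).2) with hf_def
  have hfmeas : ∀ n, Measurable (f n) := fun n =>
    (ENNReal.measurable_ofReal.comp (measurable_snd.comp (measurable_pi_apply n))).indicator
      (hEmeas n)
  set I : ℕ → Fin (m + 1) → ℝ≥0∞ := fun n j => ∫⁻ ω, (f n ω) ^ d ∂ μ j with hI_def
  have hfcons : ∀ n q ω, f (n + 1) (consStep q ω) = if q.1 = 0 then 0 else f n ω := by
    intro n q ω
    simp only [hf_def]
    by_cases hq : q.1 = 0
    · rw [if_pos hq]
      refine Set.indicator_of_notMem ?_ _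
      rw [hconsE]
      tauto
    · rw [if_neg hq]
      by_cases hω : ω ∈ E n
      · rw [Set.indicator_of_mem ((hconsE q ω n).mpr ⟨hq, hω⟩), Set.indicator_of_mem hω]
        rfl
      · rw [Set.indicator_of_notMem (fun h => hω ((hconsE q ω n).mp h).2),
          Set.indicator_of_notMem hω]
  have hI0 : ∀ j, I 0 j ≤ M := by
    intro j
    have h1 : ∀ ω : ℕ → Fin (m + 1) × ℝ, f 0 ω = ENNReal.ofReal ((ω 0).2) := by
      intro ω
      rw [hf_def]
      simp [hE0]
    have h2 : I 0 j = ∫⁻ ω, (ENNReal.ofReal ((ω 0).2)) ^ d ∂ μ j := by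
      rw [hI_def]
      exact lintegral_congr fun ω => by rw [h1]
    rw [h2, hstep j (fun ω : ℕ → Fin (m + 1) × ℝ => (ENNReal.ofReal ((ω 0).2)) ^ d)
      (((ENNReal.measurable_ofReal.comp
        (measurable_snd.comp (measurable_pi_apply 0)))).pow_const d)]
    have h3 : ∀ q : Fin (m + 1) × ℝ,
        ∫⁻ ω, (ENNReal.ofReal ((consStep q ω 0).2)) ^ d ∂ μ q.1 = (ENNReal.ofReal q.2) ^ d := by
      intro q
      have : ∀ ω : ℕ → Fin (m + 1) × ℝ, (ENNReal.ofReal ((consStep q ω 0).2)) ^ d =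
          (ENNReal.ofReal q.2) ^ d := fun ω => rfl
      rw [lintegral_congr this, lintegral_const, measure_univ, mul_one]
    rw [lintegral_congr h3]
    exact hMj j
  have hIrec : ∀ n j, I (n + 1) j = ∫⁻ q, (fun l => if l = 0 then 0 else I n l) q.1 ∂ Q j := by
    intro n j
    rw [hI_def]
    beta_reduce
    rw [hstep j _ ((hfmeas (n + 1)).pow_const d)]
    refine lintegral_congr fun q => ?_
    have h1 : ∀ ω, (f (n + 1) (consStep q ω)) ^ d = if q.1 = 0 then 0 else (f n ω) ^ d := by
      intro ω
      rw [hfcons n q ω]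
      by_cases hq : q.1 = 0
      · simp [hq, zero_pow hdne]
      · simp [hq]
    rw [lintegral_congr h1]
    beta_reduce
    by_cases hq : q.1 = 0
    · simp [hq]
    · simp only [if_neg hq]
  have hIA : ∀ n j, I n j ≤ M * A n j := by
    intro n
    induction n with
    | zero =>
      intro j
      rw [hA_eq 0 j, hE0, measure_univ, mul_one]
      exact hI0 j
    | succ n ih =>
      intro j
      rw [hIrec n j, hArec n j]
      have h1 : ∀ q : Fin (m + 1) × ℝ,
          (fun l => if l = 0 then 0 else I n l) q.1 ≤
          M * (fun l => if l = 0 then 0 else A n l) q.1 := by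
        intro q
        by_cases hq : q.1 = 0
        · simp [hq]
        · simp only [if_neg hq]
          exact ih q.1
      calc ∫⁻ q, (fun l => if l = 0 then 0 else I n l) q.1 ∂ Q j
          ≤ ∫⁻ q, M * (fun l => if l = 0 then 0 else A n l) q.1 ∂ Q j := lintegral_mono h1
        _ = M * ∫⁻ q, (fun l => if l = 0 then 0 else A n l) q.1 ∂ Q j :=
            lintegral_const_mul M (hfstmeas fun l => if l = 0 then 0 else A n l)
  have hIbound : ∀ n, ∫⁻ ω, (f n ω) ^ d ∂ μ i ≤ M * ρ ^ (n / N) := by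
    intro n
    exact (hIA n i).trans (mul_le_mul_right (hρbound n i) M)
  -- final analysis
  set p : ℝ := (d : ℝ) with hp_def
  have hd1 : 1 ≤ d := hdpos
  have hp1 : 1 ≤ p := by rw [hp_def]; exact_mod_cast hd1
  have hp0 : 0 < p := lt_of_lt_of_le one_pos hp1
  set s : ℕ → (ℕ → Fin (m + 1) × ℝ) → ℝ≥0∞ :=
    fun K ω => ∑ n ∈ Finset.range K, f n ω with hs_def
  have hsmeas : ∀ K, Measurable (s K) := by
    intro K
    exact Finset.measurable_sum _ fun n _ => hfmeas n
  have hsmono : ∀ ω, Monotone fun K => s K ω := by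
    intro ω K K' hKK'
    exact Finset.sum_le_sum_of_subset (Finset.range_subset_range.mpr hKK')
  have hW : ∀ ω : ℕ → Fin (m + 1) × ℝ,
      ENNReal.ofReal (hitReward ω) ≤ s (sInf {n | (ω n).1 = 0} + 1) ω := by
    intro ω
    set T := sInf {n | (ω n).1 = 0} with hT_def
    have hsum : ENNReal.ofReal (hitReward ω) ≤
        ∑ n ∈ Finset.range (T + 1), ENNReal.ofReal ((ω n).2) := by
      rw [hitReward]
      induction (Finset.range (T + 1)) using Finset.induction_on with
      | empty => simp
      | insert _ _ hx ih =>
        rw [Finset.sum_insert hx, Finset.sum_insert hx]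
        exact (ENNReal.ofReal_add_le).trans (add_le_add le_rfl ih)
    refine hsum.trans ?_
    refine Finset.sum_le_sum fun n hn => ?_
    have hnT : n ≤ T := Nat.lt_succ_iff.mp (Finset.mem_range.mp hn)
    have hmem : ω ∈ E n := by
      rw [hEmem]
      intro k hk hk0
      have : T ≤ k := Nat.sInf_le hk0
      omega
    rw [hf_def]
    beta_reduce
    rw [Set.indicator_of_mem hmem]
  have hmink : ∀ K, (∫⁻ ω, (s K ω) ^ p ∂ μ i) ^ (1 / p) ≤
      ∑ n ∈ Finset.range K, (∫⁻ ω, (f n ω) ^ d ∂ μ i) ^ (1 / p) := by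
    intro K
    induction K with
    | zero =>
      have hz : ∀ ω : ℕ → Fin (m + 1) × ℝ, (s 0 ω) ^ p = 0 := by
        intro ω
        rw [hs_def]
        simp only [Finset.range_zero, Finset.sum_empty]
        exact ENNReal.zero_rpow_of_pos hp0
      rw [lintegral_congr hz, lintegral_zero, Finset.sum_range_zero,
        ENNReal.zero_rpow_of_pos (by positivity)]
    | succ K ih =>
      have h1 : ∀ ω, s (K + 1) ω = s K ω + f K ω := by
        intro ω
        rw [hs_def]
        exact Finset.sum_range_succ _ K
      have h2 : (∫⁻ ω, (s (K + 1) ω) ^ p ∂ μ i) ^ (1 / p) ≤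
          (∫⁻ ω, (s K ω) ^ p ∂ μ i) ^ (1 / p) + (∫⁻ ω, (f K ω) ^ p ∂ μ i) ^ (1 / p) := by
        have := ENNReal.lintegral_Lp_add_le (hsmeas K).aemeasurable
          (hfmeas K).aemeasurable hp1 (μ := μ i)
        refine le_trans (le_of_eq ?_) this
        congr 1
        exact lintegral_congr fun ω => by rw [h1]; rfl
      have h3 : ∫⁻ ω, (f K ω) ^ p ∂ μ i = ∫⁻ ω, (f K ω) ^ d ∂ μ i :=
        lintegral_congr fun ω => by rw [hp_def, ENNReal.rpow_natCast]
      rw [Finset.sum_range_succ]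
      exact h2.trans (add_le_add ih (le_of_eq (by rw [h3])))
  set S : ℝ≥0∞ := ∑' n, (M * ρ ^ (n / N)) ^ (1 / p) with hS_def
  have hKS : ∀ K, ∑ n ∈ Finset.range K, (∫⁻ ω, (f n ω) ^ d ∂ μ i) ^ (1 / p) ≤ S := by
    intro K
    refine le_trans (Finset.sum_le_sum fun n _ =>
      ENNReal.rpow_le_rpow (hIbound n) (by positivity)) ?_
    rw [hS_def]
    exact ENNReal.sum_le_tsum (Finset.range K)
  have hStop : S ≠ ⊤ := by
    set r : ℝ≥0∞ := ρ ^ (1 / p) with hr_def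
    have hr1 : r < 1 := ENNReal.rpow_lt_one hρ1 (by positivity)
    have hr0 : r ≠ 0 := (ENNReal.rpow_pos (pos_iff_ne_zero.mpr hρ0) hρtop).ne'
    have hrtop : r ≠ ⊤ := ENNReal.rpow_ne_top_of_nonneg (by positivity) hρtop
    have hterm : ∀ n : ℕ, (M * ρ ^ (n / N)) ^ (1 / p) =
        M ^ (1 / p) * r ^ ((n / N : ℕ) : ℝ) := by
      intro n
      rw [ENNReal.mul_rpow_of_nonneg _ _ (by positivity)]
      congr 1
      rw [← ENNReal.rpow_natCast ρ (n / N), ← ENNReal.rpow_mul, hr_def, ← ENNReal.rpow_mul,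
        mul_comm]
    have hkey0 : ∀ x : ℝ≥0∞, x ≠ 0 → x ≠ ⊤ → ∀ n : ℕ,
        x ^ ((n : ℝ) / N - 1) = x⁻¹ * (x ^ ((1 : ℝ) / N)) ^ n := by
      intro x hx0 hxtop n
      rw [← ENNReal.rpow_natCast (x ^ ((1 : ℝ) / N)) n, ← ENNReal.rpow_mul,
        ← ENNReal.rpow_neg_one x, ← ENNReal.rpow_add _ _ hx0 hxtop]
      congr 1
      ring
    have hkey : ∀ n : ℕ, r ^ ((n : ℝ) / N - 1) = r⁻¹ * (r ^ ((1 : ℝ) / N)) ^ n :=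
      hkey0 r hr0 hrtop
    have hgeom : ∀ n : ℕ, r ^ ((n / N : ℕ) : ℝ) ≤ r⁻¹ * (r ^ ((1 : ℝ) / N)) ^ n := by
      intro n
      have hexp : (n : ℝ) / N - 1 ≤ ((n / N : ℕ) : ℝ) := by
        have h1 : n < (n / N + 1) * N := (Nat.div_lt_iff_lt_mul (by omega)).mp (Nat.lt_succ_self _)
        have h2 : (n : ℝ) < ((n / N : ℕ) + 1) * N := by exact_mod_cast h1
        have hN0 : (0 : ℝ) < N := by exact_mod_cast hN1
        rw [div_sub_one hN0.ne', div_le_iff₀ hN0]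
        nlinarith
      calc r ^ ((n / N : ℕ) : ℝ) ≤ r ^ ((n : ℝ) / N - 1) :=
            ENNReal.rpow_le_rpow_of_exponent_ge hr1.le hexp
        _ = r⁻¹ * (r ^ ((1 : ℝ) / N)) ^ n := hkey n
    have hq1 : r ^ ((1 : ℝ) / N) < 1 := ENNReal.rpow_lt_one hr1 (by positivity)
    have hsum : S ≤ M ^ (1 / p) * (r⁻¹ * (1 - r ^ ((1 : ℝ) / N))⁻¹) := by
      rw [hS_def]
      calc ∑' n, (M * ρ ^ (n / N)) ^ (1 / p)
          = ∑' n, M ^ (1 / p) * r ^ ((n / N : ℕ) : ℝ) := by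
            exact tsum_congr hterm
        _ ≤ ∑' n, M ^ (1 / p) * (r⁻¹ * (r ^ ((1 : ℝ) / N)) ^ n) := by
            refine ENNReal.tsum_le_tsum fun n => ?_
            exact mul_le_mul' le_rfl (hgeom n)
        _ = M ^ (1 / p) * (r⁻¹ * ∑' n, (r ^ ((1 : ℝ) / N)) ^ n) := by
            rw [ENNReal.tsum_mul_left, ENNReal.tsum_mul_left]
        _ = M ^ (1 / p) * (r⁻¹ * (1 - r ^ ((1 : ℝ) / N))⁻¹) := by
            rw [ENNReal.tsum_geometric]
    refine (lt_of_le_of_lt hsum ?_).ne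
    refine ENNReal.mul_lt_top ?_ ?_
    · exact (ENNReal.rpow_ne_top_of_nonneg (by positivity) hMtop).lt_top
    · refine ENNReal.mul_lt_top ?_ ?_
      · exact (ENNReal.inv_ne_top.mpr hr0).lt_top
      · refine (ENNReal.inv_ne_top.mpr ?_).lt_top
        intro h
        rw [tsub_eq_zero_iff_le] at h
        exact absurd h (not_le.mpr hq1)
  have hSp : S ^ p ≠ ⊤ := ENNReal.rpow_ne_top_of_nonneg hp0.le hStop
  have hfinal : ∫⁻ ω, ENNReal.ofReal (hitReward ω) ^ d ∂ μ i ≤ S ^ p := by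
    have hpt : ∀ ω, ENNReal.ofReal (hitReward ω) ^ d ≤ ⨆ K, (s K ω) ^ d := by
      intro ω
      refine le_iSup_of_le (sInf {n | (ω n).1 = 0} + 1) ?_
      exact pow_le_pow_left₀ zero_le (hW ω) d
    calc ∫⁻ ω, ENNReal.ofReal (hitReward ω) ^ d ∂ μ i
        ≤ ∫⁻ ω, ⨆ K, (s K ω) ^ d ∂ μ i := lintegral_mono hpt
      _ = ⨆ K, ∫⁻ ω, (s K ω) ^ d ∂ μ i := by
          refine lintegral_iSup (fun K => (hsmeas K).pow_const d) ?_
          intro K K' hKK' ω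
          exact pow_le_pow_left₀ zero_le (hsmono ω hKK') d
      _ ≤ S ^ p := by
          refine iSup_le fun K => ?_
          have h1 : ∫⁻ ω, (s K ω) ^ d ∂ μ i = ∫⁻ ω, (s K ω) ^ p ∂ μ i :=
            lintegral_congr fun ω => by rw [hp_def, ENNReal.rpow_natCast]
          rw [h1]
          have h2 : (∫⁻ ω, (s K ω) ^ p ∂ μ i) ^ (1 / p) ≤ S := (hmink K).trans (hKS K)
          have h3 := ENNReal.rpow_le_rpow h2 hp0.le
          rw [← ENNReal.rpow_mul, one_div, inv_mul_cancel₀ hp0.ne', ENNReal.rpow_one] at h3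
          exact h3
  exact (lt_of_le_of_lt hfinal hSp.lt_top).ne
end

section
/- Let (J_n, X_n) be a Markov renewal process, k a state with p_{kk} < 1, and define the reduced-process sojourn moments _ke_{ij}^{(r)} = E_i[(_kX_1)^r 1(_kJ_1 = j)] for i ∈ X, j ∈ X \ {k}. Then these moments satisfy, for r ≥ 1: _ke_{kj}^{(r)} = (1/(1 - p_{kk}))·(e_{kj}^{(r)} + Σ_{l=0}^{r-1} C(r,l) e_{kk}^{(r-l)} _ke_{kj}^{(l)}), and _ke_{ij}^{(r)} = e_{ij}^{(r)} + Σ_{l=0}^{r-1} C(r,l) e_{ik}^{(r-l)} _ke_{kj}^{(l)} + p_{ik} · _ke_{kj}^{(r)} for i ≠ k, where e_{ij}^{(r)} = E_i[X_1^r 1(J_1 = j)], e_{ij}^{(0)} = p_{ij}, and _ke_{ij}^{(0)} = _kp_{ij}. -/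
open MeasureTheory ENNReal

/-- Successive times `ₖV_n` of visits of the embedded chain to the reduced space
`X \ {k}`. -/
noncomputable def renV {X : Type*} (k : X) (ω : ℕ → X × ℝ) : ℕ → ℕ
  | 0 => 0
  | n + 1 => sInf {r | renV k ω n < r ∧ (ω (r - 1)).1 ≠ k}

/-- The first reduced sojourn time `ₖX₁ = ∑_{r=1}^{ₖV₁} X_r`. -/
noncomputable def redSojourn {X : Type*} (k : X) (ω : ℕ → X × ℝ) : ℝ :=
  ∑ s ∈ Finset.range (renV k ω 1), (ω s).2

/-- The first state `ₖJ₁ = J_{ₖV₁}` of the reduced embedded chain. -/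
noncomputable def redState {X : Type*} (k : X) (ω : ℕ → X × ℝ) : X :=
  (ω (renV k ω 1 - 1)).1

/-- The sojourn moments `e_{ij}^{(l)} = E_i[X₁^l 1(J₁ = j)]`. -/
noncomputable def sojournMoment {m : ℕ} (Q : Fin (m + 1) → Measure (Fin (m + 1) × ℝ))
    (i j : Fin (m + 1)) (l : ℕ) : ℝ≥0∞ :=
  ∫⁻ q in {q | q.1 = j}, (ENNReal.ofReal q.2) ^ l ∂ Q i

/-- The reduced sojourn moments `ₖe_{ij}^{(l)} = E_i[(ₖX₁)^l 1(ₖJ₁ = j)]`. -/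
noncomputable def redSojournMoment {m : ℕ} (k : Fin (m + 1))
    (μ : Fin (m + 1) → Measure (ℕ → Fin (m + 1) × ℝ))
    (i j : Fin (m + 1)) (l : ℕ) : ℝ≥0∞ :=
  ∫⁻ ω in {ω | redState k ω = j}, (ENNReal.ofReal (redSojourn k ω)) ^ l ∂ μ i

section Path

variable {X : Type*} (k : X) (q : X × ℝ) (ω : ℕ → X × ℝ)

lemma renV_one : renV k ω 1 = sInf {r | 0 < r ∧ (ω (r - 1)).1 ≠ k} := by
  show sInf {r | renV k ω 0 < r ∧ _} = _
  simp [renV]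

variable {k q ω}

lemma renV_cons_ne (hq : q.1 ≠ k) : renV k (consStep q ω) 1 = 1 := by
  rw [renV_one]
  have h1 : (1 : ℕ) ∈ {r | 0 < r ∧ (consStep q ω (r - 1)).1 ≠ k} := ⟨one_pos, hq⟩
  refine le_antisymm (Nat.sInf_le h1) (le_csInf ⟨1, h1⟩ fun b hb => hb.1)

lemma redState_cons_ne (hq : q.1 ≠ k) : redState k (consStep q ω) = q.1 := by
  simp [redState, renV_cons_ne hq, consStep]

lemma redSojourn_cons_ne (hq : q.1 ≠ k) : redSojourn k (consStep q ω) = q.2 := by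
  simp [redSojourn, renV_cons_ne hq, consStep]

lemma renV_cons_eq (hq : q.1 = k) (hex : ∃ n, (ω n).1 ≠ k) :
    renV k (consStep q ω) 1 = renV k ω 1 + 1 := by
  rw [renV_one, renV_one]
  obtain ⟨n, hn⟩ := hex
  have hSne : (n + 1) ∈ {r | 0 < r ∧ (ω (r - 1)).1 ≠ k} := ⟨Nat.succ_pos n, by simpa using hn⟩
  set S : Set ℕ := {r | 0 < r ∧ (ω (r - 1)).1 ≠ k} with hS
  have hv : sInf S ∈ S := Nat.sInf_mem ⟨_, hSne⟩
  have hmem : sInf S + 1 ∈ {r | 0 < r ∧ (consStep q ω (r - 1)).1 ≠ k} := by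
    refine ⟨Nat.succ_pos _, ?_⟩
    have h1 : 1 ≤ sInf S := hv.1
    have : sInf S + 1 - 1 = (sInf S - 1) + 1 := by omega
    rw [this]
    show (ω (sInf S - 1)).1 ≠ k
    exact hv.2
  refine le_antisymm (Nat.sInf_le hmem) (le_csInf ⟨_, hmem⟩ fun b hb => ?_)
  · rcases hb with ⟨hb0, hb1⟩
    have hb2 : 2 ≤ b := by
      by_contra h
      have hb : b = 1 := by omega
      subst hb
      exact hb1 hq
    have : b - 1 ∈ S := by
      refine ⟨by omega, ?_⟩
      have : b - 1 = (b - 2) + 1 := by omega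
      rw [this]
      have hb' : b - 1 - 1 = b - 2 := by omega
      have := hb1
      rw [show b - 1 = (b - 2) + 1 by omega] at this
      simpa [consStep] using this
    have := Nat.sInf_le this
    omega

lemma redState_cons_eq (hq : q.1 = k) (hex : ∃ n, (ω n).1 ≠ k) :
    redState k (consStep q ω) = redState k ω := by
  have hv1 : 1 ≤ renV k ω 1 := by
    rw [renV_one]
    obtain ⟨n, hn⟩ := hex
    exact (Nat.sInf_mem (⟨n + 1, Nat.succ_pos n, by simpa using hn⟩ :
      Set.Nonempty {r | 0 < r ∧ (ω (r - 1)).1 ≠ k})).1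
  rw [redState, redState, renV_cons_eq hq hex]
  have : renV k ω 1 + 1 - 1 = (renV k ω 1 - 1) + 1 := by omega
  rw [this]
  rfl

lemma redSojourn_cons_eq (hq : q.1 = k) (hex : ∃ n, (ω n).1 ≠ k) :
    redSojourn k (consStep q ω) = q.2 + redSojourn k ω := by
  rw [redSojourn, redSojourn, renV_cons_eq hq hex, Finset.sum_range_succ']
  simp [consStep, add_comm]

lemma redState_all_k (h : ∀ n, (ω n).1 = k) : redState k ω = k := by
  have : renV k ω 1 = 0 := by
    rw [renV_one, Nat.sInf_eq_zero]
    right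
    ext r
    simp only [Set.mem_setOf_eq, Set.mem_empty_iff_false, iff_false, not_and, not_not]
    exact fun _ => h _
  rw [redState, this]
  exact h 0

end Path

section Meas

variable {X : Type*} [MeasurableSpace X] [MeasurableSingletonClass X] {k j : X}

lemma measurable_nat_comp {Ω β : Type*} [MeasurableSpace Ω] [MeasurableSpace β]
    {g : Ω → ℕ} (hg : Measurable g) {h : ℕ → Ω → β} (hh : ∀ n, Measurable (h n)) :
    Measurable fun ω => h (g ω) ω := by
  intro s hs
  have : (fun ω => h (g ω) ω) ⁻¹' s = ⋃ n, {ω | g ω = n} ∩ (h n ⁻¹' s) := by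
    ext ω
    simp only [Set.mem_preimage, Set.mem_iUnion, Set.mem_inter_iff, Set.mem_setOf_eq]
    constructor
    · intro hω; exact ⟨g ω, rfl, hω⟩
    · rintro ⟨n, hn, hω⟩; rwa [hn]
  rw [this]
  exact MeasurableSet.iUnion fun n => (hg (measurableSet_singleton n)).inter (hh n hs)

lemma measurable_renV_one (k : X) : Measurable fun ω : ℕ → X × ℝ => renV k ω 1 := by
  apply measurable_to_countable'
  intro n
  have hset : ∀ ω : ℕ → X × ℝ, renV k ω 1 = n ↔
      (n = 0 ∧ ∀ s, (ω s).1 = k) ∨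
      (0 < n ∧ (ω (n - 1)).1 ≠ k ∧ ∀ s < n - 1, (ω s).1 = k) := by
    intro ω
    rw [renV_one]
    set S : Set ℕ := {r | 0 < r ∧ (ω (r - 1)).1 ≠ k} with hS
    constructor
    · intro h
      rcases Nat.eq_zero_or_pos n with h0 | h0
      · subst h0
        rw [Nat.sInf_eq_zero] at h
        rcases h with h | h
        · exact absurd h.1 (lt_irrefl 0)
        · refine Or.inl ⟨rfl, fun s => ?_⟩
          by_contra hs
          have : s + 1 ∈ S := ⟨Nat.succ_pos s, by simpa using hs⟩
          rw [h] at this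
          exact this
      · have hne : S.Nonempty := by
          by_contra hemp
          rw [Set.not_nonempty_iff_eq_empty] at hemp
          rw [hemp, Nat.sInf_empty] at h
          omega
        have hmem : n ∈ S := h ▸ Nat.sInf_mem hne
        refine Or.inr ⟨h0, hmem.2, fun s hs => ?_⟩
        by_contra hsk
        have : s + 1 ∈ S := ⟨Nat.succ_pos s, by simpa using hsk⟩
        have := Nat.sInf_le this
        omega
    · rintro (⟨h0, hall⟩ | ⟨h0, hnk, hall⟩)
      · subst h0
        rw [Nat.sInf_eq_zero]
        right
        rw [Set.eq_empty_iff_forall_notMem]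
        rintro r ⟨hr, hrk⟩
        exact hrk (hall _)
      · have hmem : n ∈ S := ⟨h0, hnk⟩
        refine le_antisymm (Nat.sInf_le hmem) (le_csInf ⟨n, hmem⟩ fun b hb => ?_)
        by_contra hbn
        push_neg at hbn
        have hb0 := hb.1
        have hb1 : b - 1 < n - 1 := by omega
        exact hb.2 (hall _ hb1)
  have : (fun ω : ℕ → X × ℝ => renV k ω 1) ⁻¹' {n} =
      {ω : ℕ → X × ℝ | (n = 0 ∧ ∀ s, (ω s).1 = k) ∨
        (0 < n ∧ (ω (n - 1)).1 ≠ k ∧ ∀ s < n - 1, (ω s).1 = k)} := by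
    ext ω; simpa using hset ω
  rw [this]
  have hcoord : ∀ s : ℕ, MeasurableSet {ω : ℕ → X × ℝ | (ω s).1 = k} :=
    fun s => (measurable_fst.comp (measurable_pi_apply s)) (measurableSet_singleton k)
  simp only [Set.setOf_or, Set.setOf_and, Set.setOf_forall]
  apply MeasurableSet.union
  · exact (MeasurableSet.const _).inter (MeasurableSet.iInter fun s => hcoord s)
  · refine (MeasurableSet.const _).inter (((hcoord _).compl).inter ?_)
    refine MeasurableSet.iInter fun s => ?_
    by_cases h : s < n - 1
    · simpa [h] using hcoord s
    · simp [h]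

lemma measurable_redState (k : X) : Measurable (redState k : (ℕ → X × ℝ) → X) :=
  measurable_nat_comp (measurable_renV_one k)
    (fun n => measurable_fst.comp (measurable_pi_apply (n - 1)))

lemma measurable_redSojourn (k : X) : Measurable (redSojourn k : (ℕ → X × ℝ) → ℝ) :=
  measurable_nat_comp (measurable_renV_one k)
    (fun n => Finset.measurable_sum _ fun s _ => measurable_snd.comp (measurable_pi_apply s))

lemma measurableSet_redState (k j : X) :
    MeasurableSet {ω : ℕ → X × ℝ | redState k ω = j} :=
  measurable_redState k (measurableSet_singleton j)

lemma measurable_consStep (q : X × ℝ) : Measurable (consStep q) := by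
  apply measurable_pi_iff.mpr
  intro n
  cases n with
  | zero => exact measurable_const
  | succ n => exact measurable_pi_apply n

lemma measurable_consStep2 :
    Measurable fun p : (X × ℝ) × (ℕ → X × ℝ) => consStep p.1 p.2 := by
  apply measurable_pi_iff.mpr
  intro n
  cases n with
  | zero => exact measurable_fst
  | succ n => exact (measurable_pi_apply n).comp measurable_snd

end Meas

section MRP

variable {m : ℕ} (Q : Fin (m + 1) → Measure (Fin (m + 1) × ℝ))
  (μ : Fin (m + 1) → Measure (ℕ → Fin (m + 1) × ℝ))

lemma measurable_kernel (hprob : ∀ i, IsProbabilityMeasure (μ i)) :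
    Measurable fun q : Fin (m + 1) × ℝ => (μ q.1).map (consStep q) := by
  apply Measure.measurable_of_measurable_coe
  intro s hs
  set B : Set ((Fin (m + 1) × ℝ) × (ℕ → Fin (m + 1) × ℝ)) :=
    (fun p : (Fin (m + 1) × ℝ) × (ℕ → Fin (m + 1) × ℝ) => consStep p.1 p.2) ⁻¹' s with hB
  have hBm : MeasurableSet B := measurable_consStep2 hs
  have hmeas : ∀ i : Fin (m + 1), Measurable fun q : Fin (m + 1) × ℝ => μ i (Prod.mk q ⁻¹' B) := by
    intro i
    haveI := hprob i
    exact measurable_measure_prodMk_left hBm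
  have heq : (fun q : Fin (m + 1) × ℝ => ((μ q.1).map (consStep q)) s) =
      fun q => ∑ i : Fin (m + 1),
        Set.indicator {p : Fin (m + 1) × ℝ | p.1 = i} (fun p => μ i (Prod.mk p ⁻¹' B)) q := by
    funext q
    rw [Measure.map_apply (measurable_consStep q) hs]
    rw [Finset.sum_eq_single q.1]
    · rw [Set.indicator_of_mem (by simp : q ∈ {p : Fin (m + 1) × ℝ | p.1 = q.1})]
      rfl
    · intro b _ hb
      apply Set.indicator_of_notMem
      simp only [Set.mem_setOf_eq]
      exact fun h => hb h.symm
    · intro h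
      exact absurd (Finset.mem_univ _) h
  rw [heq]
  exact Finset.measurable_sum _ fun i _ =>
    (hmeas i).indicator (measurable_fst (measurableSet_singleton i))

lemma mu_eq_bind (hprob : ∀ i, IsProbabilityMeasure (μ i))
    (hMRP : ∀ (i : Fin (m + 1)) (A : Set (ℕ → Fin (m + 1) × ℝ)), MeasurableSet A →
      μ i A = ∫⁻ q, μ q.1 {ω | consStep q ω ∈ A} ∂ Q i) (i : Fin (m + 1)) :
    μ i = (Q i).bind (fun q => (μ q.1).map (consStep q)) := by
  refine Measure.ext fun s hs => ?_
  rw [Measure.bind_apply hs (measurable_kernel μ hprob).aemeasurable, hMRP i s hs]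
  refine lintegral_congr fun q => ?_
  rw [Measure.map_apply (measurable_consStep q) hs]
  rfl

lemma lintegral_MRP (hprob : ∀ i, IsProbabilityMeasure (μ i))
    (hMRP : ∀ (i : Fin (m + 1)) (A : Set (ℕ → Fin (m + 1) × ℝ)), MeasurableSet A →
      μ i A = ∫⁻ q, μ q.1 {ω | consStep q ω ∈ A} ∂ Q i) (i : Fin (m + 1))
    {g : (ℕ → Fin (m + 1) × ℝ) → ℝ≥0∞} (hg : Measurable g) :
    ∫⁻ ω, g ω ∂ μ i = ∫⁻ q, ∫⁻ ω, g (consStep q ω) ∂ μ q.1 ∂ Q i := by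
  rw [mu_eq_bind Q μ hprob hMRP i, Measure.lintegral_bind (measurable_kernel μ hprob).aemeasurable hg.aemeasurable]
  refine lintegral_congr fun q => ?_
  exact lintegral_map hg (measurable_consStep q)

end MRP

section MRP2

variable {m : ℕ} (Q : Fin (m + 1) → Measure (Fin (m + 1) × ℝ))
  (μ : Fin (m + 1) → Measure (ℕ → Fin (m + 1) × ℝ))

lemma measurableSet_fst_eq (j : Fin (m + 1)) : MeasurableSet {p : Fin (m + 1) × ℝ | p.1 = j} :=
  measurable_fst (measurableSet_singleton j)

lemma coord_null (hprob : ∀ i, IsProbabilityMeasure (μ i))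
    (hQpos : ∀ i, Q i {q | q.2 < 0} = 0)
    (hMRP : ∀ (i : Fin (m + 1)) (A : Set (ℕ → Fin (m + 1) × ℝ)), MeasurableSet A →
      μ i A = ∫⁻ q, μ q.1 {ω | consStep q ω ∈ A} ∂ Q i) :
    ∀ (n : ℕ) (i : Fin (m + 1)), μ i {ω | (ω n).2 < 0} = 0 := by
  intro n
  induction n with
  | zero =>
    intro i
    have hA : MeasurableSet {ω : ℕ → Fin (m + 1) × ℝ | (ω 0).2 < 0} :=
      measurableSet_lt (measurable_snd.comp (measurable_pi_apply 0)) measurable_const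
    rw [hMRP i _ hA]
    have hset : MeasurableSet {q : Fin (m + 1) × ℝ | q.2 < 0} :=
      measurableSet_lt measurable_snd measurable_const
    have heq : ∀ q : Fin (m + 1) × ℝ,
        μ q.1 {ω | consStep q ω ∈ {ω : ℕ → Fin (m + 1) × ℝ | (ω 0).2 < 0}} =
        Set.indicator {q : Fin (m + 1) × ℝ | q.2 < 0} (fun _ => 1) q := by
      intro q
      haveI := hprob q.1
      show μ q.1 {ω | (consStep q ω 0).2 < 0} = _
      by_cases h : q.2 < 0
      · have he : {ω : ℕ → Fin (m + 1) × ℝ | (consStep q ω 0).2 < 0} = Set.univ := by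
          ext ω; simpa [consStep] using h
        rw [he, measure_univ,
          Set.indicator_of_mem (show q ∈ {q : Fin (m + 1) × ℝ | q.2 < 0} from h)]
      · have he : {ω : ℕ → Fin (m + 1) × ℝ | (consStep q ω 0).2 < 0} = ∅ := by
          ext ω; simpa [consStep] using h
        rw [he, measure_empty,
          Set.indicator_of_notMem (show q ∉ {q : Fin (m + 1) × ℝ | q.2 < 0} from h)]
    refine (lintegral_congr heq).trans ?_
    rw [lintegral_indicator hset, setLIntegral_one, hQpos i]
  | succ n ih =>
    intro i
    have hA : MeasurableSet {ω : ℕ → Fin (m + 1) × ℝ | (ω (n + 1)).2 < 0} :=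
      measurableSet_lt (measurable_snd.comp (measurable_pi_apply (n + 1))) measurable_const
    rw [hMRP i _ hA]
    have heq : ∀ q : Fin (m + 1) × ℝ,
        μ q.1 {ω | consStep q ω ∈ {ω : ℕ → Fin (m + 1) × ℝ | (ω (n + 1)).2 < 0}} = 0 := by
      intro q
      show μ q.1 {ω | (ω n).2 < 0} = 0
      exact ih q.1
    exact (lintegral_congr heq).trans lintegral_zero

lemma redSojourn_nonneg_ae (hprob : ∀ i, IsProbabilityMeasure (μ i))
    (hQpos : ∀ i, Q i {q | q.2 < 0} = 0)
    (hMRP : ∀ (i : Fin (m + 1)) (A : Set (ℕ → Fin (m + 1) × ℝ)), MeasurableSet A →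
      μ i A = ∫⁻ q, μ q.1 {ω | consStep q ω ∈ A} ∂ Q i)
    (k : Fin (m + 1)) (i : Fin (m + 1)) :
    ∀ᵐ ω ∂ μ i, 0 ≤ redSojourn k ω := by
  have h1 : μ i (⋃ n, {ω : ℕ → Fin (m + 1) × ℝ | (ω n).2 < 0}) = 0 :=
    measure_iUnion_null fun n => coord_null Q μ hprob hQpos hMRP n i
  have h2 : ∀ᵐ ω ∂ μ i, ∀ n, 0 ≤ (ω n).2 := by
    rw [ae_iff]
    refine measure_mono_null ?_ h1
    intro ω hω
    simp only [Set.mem_setOf_eq] at hω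
    push_neg at hω
    obtain ⟨n, hn⟩ := hω
    exact Set.mem_iUnion.mpr ⟨n, hn⟩
  exact h2.mono fun ω h => Finset.sum_nonneg fun s _ => h s

lemma renewal (hprob : ∀ i, IsProbabilityMeasure (μ i))
    (hMRP : ∀ (i : Fin (m + 1)) (A : Set (ℕ → Fin (m + 1) × ℝ)), MeasurableSet A →
      μ i A = ∫⁻ q, μ q.1 {ω | consStep q ω ∈ A} ∂ Q i)
    {k j : Fin (m + 1)} (hjk : j ≠ k) (i : Fin (m + 1))
    {f : ℝ → ℝ≥0∞} (hf : Measurable f) :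
    ∫⁻ ω in {ω | redState k ω = j}, f (redSojourn k ω) ∂ μ i =
      ∫⁻ q in {p : Fin (m + 1) × ℝ | p.1 = j}, f q.2 ∂ Q i +
      ∫⁻ q in {p : Fin (m + 1) × ℝ | p.1 = k},
        (∫⁻ ω in {ω | redState k ω = j}, f (q.2 + redSojourn k ω) ∂ μ k) ∂ Q i := by
  have hne : ∀ {x : Fin (m + 1)}, x = k → ¬(x = j) := fun hx hj => hjk (hj ▸ hx)
  set G : (ℕ → Fin (m + 1) × ℝ) → ℝ≥0∞ :=
    fun ω => Set.indicator {ω | redState k ω = j} (fun ω => f (redSojourn k ω)) ω with hG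
  have hGm : Measurable G :=
    (hf.comp (measurable_redSojourn k)).indicator (measurableSet_redState k j)
  have h0 : ∫⁻ ω in {ω | redState k ω = j}, f (redSojourn k ω) ∂ μ i = ∫⁻ ω, G ω ∂ μ i :=
    (lintegral_indicator (measurableSet_redState k j) _).symm
  rw [h0, lintegral_MRP Q μ hprob hMRP i hGm]
  have key : ∀ q : Fin (m + 1) × ℝ, (∫⁻ ω, G (consStep q ω) ∂ μ q.1) =
      Set.indicator {p : Fin (m + 1) × ℝ | p.1 = j} (fun q => f q.2) q +
      Set.indicator {p : Fin (m + 1) × ℝ | p.1 = k}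
        (fun q => ∫⁻ ω in {ω | redState k ω = j}, f (q.2 + redSojourn k ω) ∂ μ k) q := by
    intro q
    haveI := hprob q.1
    by_cases hqk : q.1 = k
    · have e1 : Set.indicator {p : Fin (m + 1) × ℝ | p.1 = j} (fun q => f q.2) q = 0 :=
        Set.indicator_of_notMem
          (show q ∉ {p : Fin (m + 1) × ℝ | p.1 = j} from hne hqk) _
      have e2 : ∀ ω, G (consStep q ω) =
          Set.indicator {ω | redState k ω = j} (fun ω => f (q.2 + redSojourn k ω)) ω := by
        intro ω
        show Set.indicator {ω | redState k ω = j} (fun ω => f (redSojourn k ω)) (consStep q ω) = _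
        by_cases hex : ∃ n, (ω n).1 ≠ k
        · by_cases hst : redState k ω = j
          · rw [Set.indicator_of_mem
              (show consStep q ω ∈ {ω | redState k ω = j} by
                show redState k (consStep q ω) = j
                rw [redState_cons_eq hqk hex]; exact hst),
              Set.indicator_of_mem (show ω ∈ {ω | redState k ω = j} from hst)]
            show f (redSojourn k (consStep q ω)) = _
            rw [redSojourn_cons_eq hqk hex]
          · rw [Set.indicator_of_notMem
              (show consStep q ω ∉ {ω | redState k ω = j} by
                show ¬ redState k (consStep q ω) = j
                rw [redState_cons_eq hqk hex]; exact hst),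
              Set.indicator_of_notMem (show ω ∉ {ω | redState k ω = j} from hst)]
        · push_neg at hex
          have h2 : redState k (consStep q ω) = k := by
            apply redState_all_k
            intro n
            cases n with
            | zero => exact hqk
            | succ n => exact hex n
          rw [Set.indicator_of_notMem
              (show consStep q ω ∉ {ω | redState k ω = j} from hne h2),
            Set.indicator_of_notMem
              (show ω ∉ {ω | redState k ω = j} from hne (redState_all_k hex))]
      rw [lintegral_congr e2, lintegral_indicator (measurableSet_redState k j), e1, zero_add,
        Set.indicator_of_mem (show q ∈ {p : Fin (m + 1) × ℝ | p.1 = k} from hqk), hqk]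
    · by_cases hqj : q.1 = j
      · have e2 : ∀ ω, G (consStep q ω) = f q.2 := by
          intro ω
          show Set.indicator {ω | redState k ω = j} (fun ω => f (redSojourn k ω)) (consStep q ω)
            = f q.2
          rw [Set.indicator_of_mem
            (show consStep q ω ∈ {ω | redState k ω = j} by
              show redState k (consStep q ω) = j
              rw [redState_cons_ne hqk]; exact hqj)]
          show f (redSojourn k (consStep q ω)) = f q.2
          rw [redSojourn_cons_ne hqk]
        rw [lintegral_congr e2, lintegral_const, measure_univ, mul_one,
          Set.indicator_of_mem (show q ∈ {p : Fin (m + 1) × ℝ | p.1 = j} from hqj),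
          Set.indicator_of_notMem (show q ∉ {p : Fin (m + 1) × ℝ | p.1 = k} from hqk), add_zero]
      · have e2 : ∀ ω, G (consStep q ω) = 0 := by
          intro ω
          show Set.indicator {ω | redState k ω = j} (fun ω => f (redSojourn k ω)) (consStep q ω) = 0
          exact Set.indicator_of_notMem
            (show consStep q ω ∉ {ω | redState k ω = j} by
              show ¬ redState k (consStep q ω) = j
              rw [redState_cons_ne hqk]; exact hqj) _
        rw [lintegral_congr e2, lintegral_zero,
          Set.indicator_of_notMem (show q ∉ {p : Fin (m + 1) × ℝ | p.1 = j} from hqj),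
          Set.indicator_of_notMem (show q ∉ {p : Fin (m + 1) × ℝ | p.1 = k} from hqk), add_zero]
  rw [lintegral_congr key]
  have hm1 : Measurable fun q : Fin (m + 1) × ℝ => f q.2 := hf.comp measurable_snd
  rw [lintegral_add_left (hm1.indicator (measurableSet_fst_eq j)),
    lintegral_indicator (measurableSet_fst_eq j), lintegral_indicator (measurableSet_fst_eq k)]

end MRP2

section Moments

variable {m : ℕ} (Q : Fin (m + 1) → Measure (Fin (m + 1) × ℝ))
  (μ : Fin (m + 1) → Measure (ℕ → Fin (m + 1) × ℝ))

lemma ofReal_pow_meas (k : Fin (m + 1)) (l : ℕ) :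
    Measurable fun ω : ℕ → Fin (m + 1) × ℝ => (ENNReal.ofReal (redSojourn k ω)) ^ l :=
  ((measurable_redSojourn k).ennreal_ofReal).pow_const l

lemma inner_expand (hprob : ∀ i, IsProbabilityMeasure (μ i))
    (hQpos : ∀ i, Q i {q | q.2 < 0} = 0)
    (hMRP : ∀ (i : Fin (m + 1)) (A : Set (ℕ → Fin (m + 1) × ℝ)), MeasurableSet A →
      μ i A = ∫⁻ q, μ q.1 {ω | consStep q ω ∈ A} ∂ Q i)
    (k j : Fin (m + 1)) (r : ℕ) {a : ℝ} (ha : 0 ≤ a) :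
    ∫⁻ ω in {ω | redState k ω = j}, (ENNReal.ofReal (a + redSojourn k ω)) ^ r ∂ μ k =
    ∑ l ∈ Finset.range (r + 1),
      (ENNReal.ofReal a) ^ (r - l) * (r.choose l : ℝ≥0∞) * redSojournMoment k μ k j l := by
  have hae : ∀ᵐ ω ∂ (μ k).restrict {ω | redState k ω = j},
      (ENNReal.ofReal (a + redSojourn k ω)) ^ r =
      ∑ l ∈ Finset.range (r + 1),
        (ENNReal.ofReal (redSojourn k ω)) ^ l *
          ((ENNReal.ofReal a) ^ (r - l) * (r.choose l : ℝ≥0∞)) := by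
    filter_upwards [ae_restrict_of_ae (redSojourn_nonneg_ae Q μ hprob hQpos hMRP k k)] with ω hω
    rw [ENNReal.ofReal_add ha hω, add_comm, add_pow]
    exact Finset.sum_congr rfl fun l _ => by ring
  rw [lintegral_congr_ae hae,
    lintegral_finset_sum _ (fun l _ => (ofReal_pow_meas k l).mul_const _)]
  refine Finset.sum_congr rfl fun l _ => ?_
  rw [lintegral_mul_const _ (ofReal_pow_meas k l)]
  unfold redSojournMoment
  ring

lemma moment_expand (hprob : ∀ i, IsProbabilityMeasure (μ i))
    (hQpos : ∀ i, Q i {q | q.2 < 0} = 0)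
    (hMRP : ∀ (i : Fin (m + 1)) (A : Set (ℕ → Fin (m + 1) × ℝ)), MeasurableSet A →
      μ i A = ∫⁻ q, μ q.1 {ω | consStep q ω ∈ A} ∂ Q i)
    {k j : Fin (m + 1)} (hjk : j ≠ k) (i : Fin (m + 1)) (r : ℕ) :
    redSojournMoment k μ i j r = sojournMoment Q i j r +
      ∑ l ∈ Finset.range (r + 1),
        (r.choose l : ℝ≥0∞) * sojournMoment Q i k (r - l) * redSojournMoment k μ k j l := by
  have hf : Measurable fun x : ℝ => (ENNReal.ofReal x) ^ r :=
    ENNReal.measurable_ofReal.pow_const r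
  have h : redSojournMoment k μ i j r =
      (∫⁻ q in {p : Fin (m + 1) × ℝ | p.1 = j}, (ENNReal.ofReal q.2) ^ r ∂ Q i) +
      ∫⁻ q in {p : Fin (m + 1) × ℝ | p.1 = k},
        (∫⁻ ω in {ω | redState k ω = j}, (ENNReal.ofReal (q.2 + redSojourn k ω)) ^ r ∂ μ k)
        ∂ Q i := renewal Q μ hprob hMRP hjk i hf
  have hB : (∫⁻ q in {p : Fin (m + 1) × ℝ | p.1 = k},
      (∫⁻ ω in {ω | redState k ω = j}, (ENNReal.ofReal (q.2 + redSojourn k ω)) ^ r ∂ μ k) ∂ Q i)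
      = ∑ l ∈ Finset.range (r + 1),
        (r.choose l : ℝ≥0∞) * sojournMoment Q i k (r - l) * redSojournMoment k μ k j l := by
    have hq : ∀ᵐ q ∂ Q i, 0 ≤ q.2 := by
      rw [ae_iff]
      convert hQpos i using 2
      ext q; simp [not_le]
    have hae : ∀ᵐ q ∂ (Q i).restrict {p : Fin (m + 1) × ℝ | p.1 = k},
        (∫⁻ ω in {ω | redState k ω = j}, (ENNReal.ofReal (q.2 + redSojourn k ω)) ^ r ∂ μ k) =
        ∑ l ∈ Finset.range (r + 1),
          (ENNReal.ofReal q.2) ^ (r - l) * (r.choose l : ℝ≥0∞) * redSojournMoment k μ k j l := by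
      filter_upwards [ae_restrict_of_ae hq] with q hq2
      exact inner_expand Q μ hprob hQpos hMRP k j r hq2
    rw [lintegral_congr_ae hae,
      lintegral_finset_sum _
        (fun l _ => ((measurable_snd.ennreal_ofReal.pow_const (r - l)).mul_const _).mul_const _)]
    refine Finset.sum_congr rfl fun l _ => ?_
    rw [lintegral_mul_const _ ((measurable_snd.ennreal_ofReal.pow_const (r - l)).mul_const _),
      lintegral_mul_const _ (measurable_snd.ennreal_ofReal.pow_const (r - l))]
    unfold sojournMoment
    ring
  rw [h, hB]
  rfl

end Moments

lemma min_add_le {x y n : ℝ≥0∞} : min (x + y) n ≤ x + min y n := by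
  rcases le_total y n with h | h
  · rw [min_eq_left h]; exact min_le_left _ _
  · rw [min_eq_right h]; exact (min_le_right _ _).trans le_add_self

section Trunc

variable {m : ℕ} (Q : Fin (m + 1) → Measure (Fin (m + 1) × ℝ))
  (μ : Fin (m + 1) → Measure (ℕ → Fin (m + 1) × ℝ))

lemma sojournMoment_zero (i j : Fin (m + 1)) :
    sojournMoment Q i j 0 = Q i {q | q.1 = j} := by
  unfold sojournMoment
  simp only [pow_zero]
  exact setLIntegral_one _

lemma trunc_ineq (hprob : ∀ i, IsProbabilityMeasure (μ i))
    (hQpos : ∀ i, Q i {q | q.2 < 0} = 0)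
    (hMRP : ∀ (i : Fin (m + 1)) (A : Set (ℕ → Fin (m + 1) × ℝ)), MeasurableSet A →
      μ i A = ∫⁻ q, μ q.1 {ω | consStep q ω ∈ A} ∂ Q i)
    {k j : Fin (m + 1)} (hjk : j ≠ k) (r n : ℕ) :
    (∫⁻ ω in {ω | redState k ω = j}, min ((ENNReal.ofReal (redSojourn k ω)) ^ r) n ∂ μ k) ≤
    sojournMoment Q k j r + (∑ l ∈ Finset.range r,
      (r.choose l : ℝ≥0∞) * sojournMoment Q k k (r - l) * redSojournMoment k μ k j l) +
    Q k {p : Fin (m + 1) × ℝ | p.1 = k} *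
      ∫⁻ ω in {ω | redState k ω = j}, min ((ENNReal.ofReal (redSojourn k ω)) ^ r) n ∂ μ k := by
  set E : ℕ → ℝ≥0∞ := fun l => redSojournMoment k μ k j l with hE
  set xN : ℝ≥0∞ :=
    ∫⁻ ω in {ω | redState k ω = j}, min ((ENNReal.ofReal (redSojourn k ω)) ^ r) n ∂ μ k with hxN
  have hfm : Measurable fun x : ℝ => min ((ENNReal.ofReal x) ^ r) (n : ℝ≥0∞) :=
    (ENNReal.measurable_ofReal.pow_const r).min measurable_const
  have h : xN =
      (∫⁻ q in {p : Fin (m + 1) × ℝ | p.1 = j}, min ((ENNReal.ofReal q.2) ^ r) n ∂ Q k) +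
      ∫⁻ q in {p : Fin (m + 1) × ℝ | p.1 = k},
        (∫⁻ ω in {ω | redState k ω = j},
          min ((ENNReal.ofReal (q.2 + redSojourn k ω)) ^ r) n ∂ μ k) ∂ Q k :=
    renewal Q μ hprob hMRP hjk k hfm
  have hA : (∫⁻ q in {p : Fin (m + 1) × ℝ | p.1 = j}, min ((ENNReal.ofReal q.2) ^ r) n ∂ Q k) ≤
      sojournMoment Q k j r := lintegral_mono fun q => min_le_left _ _
  have hinner : ∀ a : ℝ, 0 ≤ a →
      (∫⁻ ω in {ω | redState k ω = j},
        min ((ENNReal.ofReal (a + redSojourn k ω)) ^ r) n ∂ μ k) ≤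
      (∑ l ∈ Finset.range r,
        (ENNReal.ofReal a) ^ (r - l) * (r.choose l : ℝ≥0∞) * E l) + xN := by
    intro a ha
    have hpt : ∀ᵐ ω ∂ (μ k).restrict {ω | redState k ω = j},
        min ((ENNReal.ofReal (a + redSojourn k ω)) ^ r) n ≤
        (∑ l ∈ Finset.range r, (ENNReal.ofReal (redSojourn k ω)) ^ l *
          ((ENNReal.ofReal a) ^ (r - l) * (r.choose l : ℝ≥0∞))) +
        min ((ENNReal.ofReal (redSojourn k ω)) ^ r) n := by
      filter_upwards [ae_restrict_of_ae (redSojourn_nonneg_ae Q μ hprob hQpos hMRP k k)]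
        with ω hω
      rw [ENNReal.ofReal_add ha hω, add_comm, add_pow, Finset.sum_range_succ, Nat.choose_self,
        Nat.sub_self, Nat.cast_one, pow_zero, mul_one, mul_one]
      simp only [mul_assoc]
      exact min_add_le
    refine (lintegral_mono_ae hpt).trans ?_
    rw [lintegral_add_left
      (Finset.measurable_sum _ fun l _ => (ofReal_pow_meas k l).mul_const _)]
    refine add_le_add_left (le_of_eq ?_) _
    rw [lintegral_finset_sum _ (fun l _ => (ofReal_pow_meas k l).mul_const _)]
    refine Finset.sum_congr rfl fun l _ => ?_
    rw [lintegral_mul_const _ (ofReal_pow_meas k l)]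
    show (∫⁻ ω in {ω | redState k ω = j}, (ENNReal.ofReal (redSojourn k ω)) ^ l ∂ μ k) * _ = _
    rw [hE]
    unfold redSojournMoment
    ring
  have hq : ∀ᵐ q ∂ Q k, 0 ≤ q.2 := by
    rw [ae_iff]
    convert hQpos k using 2
    ext q; simp [not_le]
  have hB : (∫⁻ q in {p : Fin (m + 1) × ℝ | p.1 = k},
      (∫⁻ ω in {ω | redState k ω = j},
        min ((ENNReal.ofReal (q.2 + redSojourn k ω)) ^ r) n ∂ μ k) ∂ Q k) ≤
      (∑ l ∈ Finset.range r,
        (r.choose l : ℝ≥0∞) * sojournMoment Q k k (r - l) * E l) +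
      Q k {p : Fin (m + 1) × ℝ | p.1 = k} * xN := by
    have hmono : ∀ᵐ q ∂ (Q k).restrict {p : Fin (m + 1) × ℝ | p.1 = k},
        (∫⁻ ω in {ω | redState k ω = j},
          min ((ENNReal.ofReal (q.2 + redSojourn k ω)) ^ r) n ∂ μ k) ≤
        (∑ l ∈ Finset.range r,
          (ENNReal.ofReal q.2) ^ (r - l) * (r.choose l : ℝ≥0∞) * E l) + xN := by
      filter_upwards [ae_restrict_of_ae hq] with q hq2
      exact hinner q.2 hq2
    refine (lintegral_mono_ae hmono).trans (le_of_eq ?_)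
    rw [lintegral_add_left (Finset.measurable_sum _ fun l _ =>
      ((measurable_snd.ennreal_ofReal.pow_const (r - l)).mul_const _).mul_const _)]
    congr 1
    · rw [lintegral_finset_sum _ (fun l _ =>
        ((measurable_snd.ennreal_ofReal.pow_const (r - l)).mul_const _).mul_const _)]
      refine Finset.sum_congr rfl fun l _ => ?_
      rw [lintegral_mul_const _
          ((measurable_snd.ennreal_ofReal.pow_const (r - l)).mul_const _),
        lintegral_mul_const _ (measurable_snd.ennreal_ofReal.pow_const (r - l))]
      unfold sojournMoment
      ring
    · rw [setLIntegral_const, mul_comm]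
  calc xN = _ + _ := h
  _ ≤ sojournMoment Q k j r + ((∑ l ∈ Finset.range r,
        (r.choose l : ℝ≥0∞) * sojournMoment Q k k (r - l) * E l) +
      Q k {p : Fin (m + 1) × ℝ | p.1 = k} * xN) := add_le_add hA hB
  _ = _ := by rw [← add_assoc]

lemma redMoment_ne_top (hprob : ∀ i, IsProbabilityMeasure (μ i))
    (hQpos : ∀ i, Q i {q | q.2 < 0} = 0)
    (hMRP : ∀ (i : Fin (m + 1)) (A : Set (ℕ → Fin (m + 1) × ℝ)), MeasurableSet A →
      μ i A = ∫⁻ q, μ q.1 {ω | consStep q ω ∈ A} ∂ Q i)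
    {k j : Fin (m + 1)} (hjk : j ≠ k) (hpkk : Q k {q | q.1 = k} < 1) {r : ℕ}
    (hfin : ∀ i j, ∀ l ≤ r, sojournMoment Q i j l ≠ ⊤) :
    ∀ l ≤ r, redSojournMoment k μ k j l ≠ ⊤ := by
  intro l
  induction l using Nat.strong_induction_on with
  | _ l IH =>
    intro hlr
    set p : ℝ≥0∞ := Q k {q | q.1 = k} with hp
    have h1 : 1 - p ≠ 0 := (tsub_pos_of_lt hpkk).ne'
    have h2 : 1 - p ≠ ⊤ := (tsub_le_self.trans_lt (by norm_num : (1 : ℝ≥0∞) < ⊤)).ne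
    set c : ℝ≥0∞ := sojournMoment Q k j l + ∑ l' ∈ Finset.range l,
      (l.choose l' : ℝ≥0∞) * sojournMoment Q k k (l - l') * redSojournMoment k μ k j l'
      with hc
    have hcfin : c ≠ ⊤ := by
      rw [hc]
      refine ENNReal.add_ne_top.mpr ⟨hfin k j l hlr, ?_⟩
      refine (ENNReal.sum_lt_top.mpr fun l' hl' => ?_).ne
      have hl'l : l' < l := Finset.mem_range.mp hl'
      refine ENNReal.mul_lt_top ?_ ?_
      · exact ENNReal.mul_lt_top (ENNReal.natCast_lt_top _)
          (lt_top_iff_ne_top.mpr (hfin k k (l - l') (le_trans (Nat.sub_le _ _) hlr)))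
      · exact lt_top_iff_ne_top.mpr (IH l' hl'l (le_trans hl'l.le hlr))
    set xN : ℕ → ℝ≥0∞ := fun n =>
      ∫⁻ ω in {ω | redState k ω = j}, min ((ENNReal.ofReal (redSojourn k ω)) ^ l) n ∂ μ k
      with hxN
    have hxle : ∀ n, xN n ≤ (1 - p)⁻¹ * c := by
      intro n
      have hx_fin : xN n ≠ ⊤ := by
        haveI := hprob k
        have : xN n ≤ n := by
          calc xN n ≤ ∫⁻ _ in {ω | redState k ω = j}, (n : ℝ≥0∞) ∂ μ k :=
              lintegral_mono fun ω => min_le_right _ _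
          _ = n * μ k {ω | redState k ω = j} := setLIntegral_const _ _
          _ ≤ n * 1 := mul_le_mul_right prob_le_one _
          _ = n := mul_one _
        exact (this.trans_lt (ENNReal.natCast_lt_top n)).ne
      have hineq := trunc_ineq Q μ hprob hQpos hMRP hjk l n
      have hsub : (1 - p) * xN n ≤ c := by
        rw [ENNReal.sub_mul (fun _ _ => hx_fin), one_mul]
        exact tsub_le_iff_right.mpr hineq
      calc xN n = (1 - p)⁻¹ * ((1 - p) * xN n) := by
            rw [← mul_assoc, ENNReal.inv_mul_cancel h1 h2, one_mul]
      _ ≤ (1 - p)⁻¹ * c := mul_le_mul_right hsub _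
    have hsup : redSojournMoment k μ k j l = ⨆ n : ℕ, xN n := by
      have hpt : ∀ ω : ℕ → Fin (m + 1) × ℝ, (ENNReal.ofReal (redSojourn k ω)) ^ l =
          ⨆ n : ℕ, min ((ENNReal.ofReal (redSojourn k ω)) ^ l) n := by
        intro ω
        rw [eq_comm]
        have h3 : (⨆ n : ℕ, min ((ENNReal.ofReal (redSojourn k ω)) ^ l) (n : ℝ≥0∞)) =
            (ENNReal.ofReal (redSojourn k ω)) ^ l ⊓ ⨆ n : ℕ, (n : ℝ≥0∞) := by
          rw [inf_iSup_eq]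
        rw [h3, ENNReal.iSup_natCast, inf_top_eq]
      show (∫⁻ ω in {ω | redState k ω = j}, (ENNReal.ofReal (redSojourn k ω)) ^ l ∂ μ k) = _
      rw [lintegral_congr hpt]
      exact lintegral_iSup (fun n => (ofReal_pow_meas k l).min measurable_const)
        (fun a b hab ω => min_le_min le_rfl (Nat.cast_le.mpr hab))
    rw [hsup]
    exact ne_top_of_le_ne_top (ENNReal.mul_ne_top (ENNReal.inv_ne_top.mpr h1) hcfin)
      (iSup_le hxle)

end Trunc


/-- The reduced sojourn moments satisfy, for `r ≥ 1` and `j ≠ k`: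
`ₖe_{kj}^{(r)} = (1 - p_{kk})⁻¹ (e_{kj}^{(r)} + ∑_{l<r} C(r,l) e_{kk}^{(r-l)} ₖe_{kj}^{(l)})`
and, for `i ≠ k`,
`ₖe_{ij}^{(r)} = e_{ij}^{(r)} + ∑_{l<r} C(r,l) e_{ik}^{(r-l)} ₖe_{kj}^{(l)} + p_{ik} ₖe_{kj}^{(r)}`. -/
theorem reduced_sojourn_moment_recurrence {m : ℕ}
    (Q : Fin (m + 1) → Measure (Fin (m + 1) × ℝ))
    (hQ : ∀ i, IsProbabilityMeasure (Q i))
    (hQpos : ∀ i, Q i {q | q.2 < 0} = 0)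
    (μ : Fin (m + 1) → Measure (ℕ → Fin (m + 1) × ℝ))
    (hprob : ∀ i, IsProbabilityMeasure (μ i))
    (hMRP : ∀ (i : Fin (m + 1)) (A : Set (ℕ → Fin (m + 1) × ℝ)), MeasurableSet A →
      μ i A = ∫⁻ q, μ q.1 {ω | consStep q ω ∈ A} ∂ Q i)
    (k : Fin (m + 1)) (hpkk : Q k {q | q.1 = k} < 1)
    (r : ℕ) (hr : 1 ≤ r)
    (hfin : ∀ i j, ∀ l ≤ r, sojournMoment Q i j l ≠ ⊤) :
    (∀ j, j ≠ k →
      redSojournMoment k μ k j r =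
        (1 - Q k {q | q.1 = k})⁻¹ *
          (sojournMoment Q k j r + ∑ l ∈ Finset.range r,
            (r.choose l : ℝ≥0∞) * sojournMoment Q k k (r - l) * redSojournMoment k μ k j l)) ∧
    (∀ i j, i ≠ k → j ≠ k →
      redSojournMoment k μ i j r =
        sojournMoment Q i j r + (∑ l ∈ Finset.range r,
          (r.choose l : ℝ≥0∞) * sojournMoment Q i k (r - l) * redSojournMoment k μ k j l) +
        Q i {q | q.1 = k} * redSojournMoment k μ k j r) := by
  have expand : ∀ (i j : Fin (m + 1)), j ≠ k →
      redSojournMoment k μ i j r =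
        sojournMoment Q i j r + (∑ l ∈ Finset.range r,
          (r.choose l : ℝ≥0∞) * sojournMoment Q i k (r - l) * redSojournMoment k μ k j l) +
        Q i {q | q.1 = k} * redSojournMoment k μ k j r := by
    intro i j hjk
    have h := moment_expand Q μ hprob hQpos hMRP hjk i r
    rw [Finset.sum_range_succ, Nat.choose_self, Nat.sub_self, Nat.cast_one, one_mul,
      sojournMoment_zero, ← add_assoc] at h
    exact h
  constructor
  · intro j hjk
    set p : ℝ≥0∞ := Q k {q | q.1 = k} with hp
    have h1 : 1 - p ≠ 0 := (tsub_pos_of_lt hpkk).ne'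
    have h2 : 1 - p ≠ ⊤ := (tsub_le_self.trans_lt (by norm_num : (1 : ℝ≥0∞) < ⊤)).ne
    have hx : redSojournMoment k μ k j r ≠ ⊤ :=
      redMoment_ne_top Q μ hprob hQpos hMRP hjk hpkk hfin r le_rfl
    have hpx : p * redSojournMoment k μ k j r ≠ ⊤ :=
      ENNReal.mul_ne_top (hpkk.trans_le le_top).ne hx
    have h := expand k j hjk
    have hsub : (1 - p) * redSojournMoment k μ k j r =
        sojournMoment Q k j r + ∑ l ∈ Finset.range r,
          (r.choose l : ℝ≥0∞) * sojournMoment Q k k (r - l) * redSojournMoment k μ k j l := by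
      rw [ENNReal.sub_mul (fun _ _ => hx), one_mul]
      exact ENNReal.sub_eq_of_eq_add hpx h
    calc redSojournMoment k μ k j r
        = (1 - p)⁻¹ * ((1 - p) * redSojournMoment k μ k j r) := by
          rw [← mul_assoc, ENNReal.inv_mul_cancel h1 h2, one_mul]
    _ = _ := by rw [hsub]
  · intro i j _ hjk
    exact expand i j hjk
end
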